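/- (Hoggar's theorem.) Let V and W be independent ℤ₊-valued LC random variables, each of whose support is an interval of ℤ₊ containing 0 (i.e. {s : P(V = s) > 0} is of the form {0,1,…,m} or all of ℤ₊, and likewise for W). Then the sum V + W is LC. -/
import Mathlib

/-- Ratio monotonicity: for a log-concave nonnegative sequence with interval support,
`q (b+1) / q b` is nonincreasing (in cross-multiplied form). -/
private lemma ratio_lem (q : ℕ → ℝ) (hq0 : ∀ s, 0 ≤ q s)
    (hqlc : ∀ s : ℕ, 1 ≤ s → q s ^ 2 ≥ q (s - 1) * q (s + 1))
    (hqint : ∀ s t : ℕ, t ≤ s → 0 < q s → 0 < q t) :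
    ∀ a b : ℕ, a ≤ b → q (b + 1) * q a ≤ q b * q (a + 1) := by
  intro a b hab
  induction b, hab using Nat.le_induction with
  | base => nlinarith [hq0 a, hq0 (a+1)]
  | succ b hab ih =>
    by_cases hb : 0 < q (b + 1)
    · have hlc := hqlc (b + 1) (by omega)
      simp only [Nat.add_sub_cancel] at hlc
      nlinarith [mul_nonneg (hq0 (b + 2)) (sub_nonneg.2 ih),
        mul_nonneg (hq0 (a + 1)) (sub_nonneg.2 hlc), hq0 a, hq0 (a + 1)]
    · have h2 : q (b + 1 + 1) = 0 := by
        by_contra h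
        have hpos : 0 < q (b + 2) := lt_of_le_of_ne (hq0 _) (Ne.symm h)
        exact hb (hqint (b + 2) (b + 1) (by omega) hpos)
      rw [h2, zero_mul]
      exact mul_nonneg (hq0 _) (hq0 _)

private def auxA' (p : ℕ → ℝ) : ℕ → ℝ := fun k => if k = 0 then 0 else p (k - 1)
private def auxB (q : ℕ → ℝ) (s : ℕ) : ℕ → ℝ := fun k => if k ≤ s then q (s - k) else 0
private def auxB' (q : ℕ → ℝ) (s : ℕ) : ℕ → ℝ := fun k => q (s + 1 - k)

/-- Cauchy–Binet style key inequality for a `2 × N` times `N × 2` product. -/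
private lemma conv_key (N : ℕ) (a a' b b' : ℕ → ℝ)
    (h : ∀ k l : ℕ, 0 ≤ (a k * a' l - a' k * a l) * (b k * b' l - b l * b' k)) :
    (∑ k ∈ Finset.range N, a' k * b k) * (∑ k ∈ Finset.range N, a k * b' k) ≤
      (∑ k ∈ Finset.range N, a k * b k) * (∑ k ∈ Finset.range N, a' k * b' k) := by
  have hf : ∑ k ∈ Finset.range N, ∑ l ∈ Finset.range N,
        ((a k * b k) * (a' l * b' l) - (a' k * b k) * (a l * b' l))
      = (∑ k ∈ Finset.range N, a k * b k) * (∑ k ∈ Finset.range N, a' k * b' k)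
        - (∑ k ∈ Finset.range N, a' k * b k) * (∑ k ∈ Finset.range N, a k * b' k) := by
    rw [Finset.sum_mul_sum, Finset.sum_mul_sum, ← Finset.sum_sub_distrib]
    exact Finset.sum_congr rfl fun k _ => by rw [← Finset.sum_sub_distrib]
  have hg : ∑ k ∈ Finset.range N, ∑ l ∈ Finset.range N,
        ((a l * b l) * (a' k * b' k) - (a' l * b l) * (a k * b' k))
      = (∑ k ∈ Finset.range N, a k * b k) * (∑ k ∈ Finset.range N, a' k * b' k)
        - (∑ k ∈ Finset.range N, a' k * b k) * (∑ k ∈ Finset.range N, a k * b' k) := by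
    rw [Finset.sum_comm]; exact hf
  have h2 : 0 ≤ ∑ k ∈ Finset.range N, ∑ l ∈ Finset.range N,
      ((a k * a' l - a' k * a l) * (b k * b' l - b l * b' k)) :=
    Finset.sum_nonneg fun k _ => Finset.sum_nonneg fun l _ => h k l
  have h3 : ∑ k ∈ Finset.range N, ∑ l ∈ Finset.range N,
        ((a k * a' l - a' k * a l) * (b k * b' l - b l * b' k))
      = (∑ k ∈ Finset.range N, ∑ l ∈ Finset.range N,
          ((a k * b k) * (a' l * b' l) - (a' k * b k) * (a l * b' l)))
        + (∑ k ∈ Finset.range N, ∑ l ∈ Finset.range N,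
          ((a l * b l) * (a' k * b' k) - (a' l * b l) * (a k * b' k))) := by
    rw [← Finset.sum_add_distrib]
    refine Finset.sum_congr rfl fun k _ => ?_
    rw [← Finset.sum_add_distrib]
    exact Finset.sum_congr rfl fun l _ => by ring
  rw [h3, hf, hg] at h2
  linarith

theorem stmt3 (p q : ℕ → ℝ)
    (hp0 : ∀ s, 0 ≤ p s) (hq0 : ∀ s, 0 ≤ q s)
    (hp1 : ∑' s, p s = 1) (hq1 : ∑' s, q s = 1)
    (hplc : ∀ s : ℕ, 1 ≤ s → p s ^ 2 ≥ p (s - 1) * p (s + 1))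
    (hqlc : ∀ s : ℕ, 1 ≤ s → q s ^ 2 ≥ q (s - 1) * q (s + 1))
    (hpzero : 0 < p 0) (hpint : ∀ s t : ℕ, t ≤ s → 0 < p s → 0 < p t)
    (hqzero : 0 < q 0) (hqint : ∀ s t : ℕ, t ≤ s → 0 < q s → 0 < q t) :
    ∀ s : ℕ, 1 ≤ s →
      (∑ k ∈ Finset.range (s + 1), p k * q (s - k)) ^ 2 ≥
        (∑ k ∈ Finset.range s, p k * q (s - 1 - k)) *
          (∑ k ∈ Finset.range (s + 2), p k * q (s + 1 - k)) := by
  intro s hs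
  -- rewrite all four sums over a common range `range (s+2)`
  have e1 : ∑ k ∈ Finset.range (s + 1), p k * q (s - k)
      = ∑ k ∈ Finset.range (s + 2), p k * auxB q s k := by
    rw [Finset.sum_range_succ (f := fun k => p k * auxB q s k)]
    have hb0 : auxB q s (s + 1) = 0 := by
      unfold auxB; rw [if_neg (by omega)]
    rw [hb0, mul_zero, add_zero]
    refine Finset.sum_congr rfl fun k hk => ?_
    have hk' : k ≤ s := by simpa [Nat.lt_succ_iff] using hk
    unfold auxB; rw [if_pos hk']
  have e2 : ∑ k ∈ Finset.range (s + 2), p k * q (s + 1 - k)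
      = ∑ k ∈ Finset.range (s + 2), p k * auxB' q s k := rfl
  have e3 : ∑ k ∈ Finset.range s, p k * q (s - 1 - k)
      = ∑ k ∈ Finset.range (s + 2), auxA' p k * auxB q s k := by
    rw [Finset.sum_range_succ' (f := fun k => auxA' p k * auxB q s k)]
    have ha0 : auxA' p 0 = 0 := by unfold auxA'; rw [if_pos rfl]
    rw [ha0, zero_mul, add_zero]
    rw [Finset.sum_range_succ (f := fun i => auxA' p (i + 1) * auxB q s (i + 1))]
    have hb0 : auxB q s (s + 1) = 0 := by
      unfold auxB; rw [if_neg (by omega)]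
    rw [hb0, mul_zero, add_zero]
    refine Finset.sum_congr rfl fun i hi => ?_
    have hi' : i < s := Finset.mem_range.mp hi
    unfold auxA' auxB
    rw [if_neg (by omega), if_pos (by omega)]
    congr 2 <;> omega
  have e4 : ∑ k ∈ Finset.range (s + 1), p k * q (s - k)
      = ∑ k ∈ Finset.range (s + 2), auxA' p k * auxB' q s k := by
    rw [Finset.sum_range_succ' (f := fun k => auxA' p k * auxB' q s k)]
    have ha0 : auxA' p 0 = 0 := by unfold auxA'; rw [if_pos rfl]
    rw [ha0, zero_mul, add_zero]
    refine Finset.sum_congr rfl fun i _ => ?_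
    unfold auxA' auxB'
    rw [if_neg (by omega)]
    congr 2 <;> omega
  -- the minors are nonnegative
  have hA : ∀ k l : ℕ, k ≤ l → 0 ≤ p k * auxA' p l - auxA' p k * p l := by
    intro k l hkl
    by_cases hk : k = 0
    · subst hk
      have : auxA' p 0 = 0 := by unfold auxA'; rw [if_pos rfl]
      rw [this, zero_mul, sub_zero]
      refine mul_nonneg (hp0 0) ?_
      unfold auxA'; split
      · exact le_refl 0
      · exact hp0 _
    · have hl : l ≠ 0 := by omega
      have hr := ratio_lem p hp0 hplc hpint (k - 1) (l - 1) (by omega)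
      have h1 : l - 1 + 1 = l := by omega
      have h2 : k - 1 + 1 = k := by omega
      rw [h1, h2] at hr
      unfold auxA'
      rw [if_neg hl, if_neg hk]
      linarith
  have hB : ∀ k l : ℕ, k ≤ l → 0 ≤ auxB q s k * auxB' q s l - auxB q s l * auxB' q s k := by
    intro k l hkl
    by_cases hl : l ≤ s
    · have hk : k ≤ s := le_trans hkl hl
      have hr := ratio_lem q hq0 hqlc hqint (s - l) (s - k) (by omega)
      have h1 : s - k + 1 = s + 1 - k := by omega
      have h2 : s - l + 1 = s + 1 - l := by omega
      rw [h1, h2] at hr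
      unfold auxB auxB'
      rw [if_pos hk, if_pos hl]
      linarith
    · unfold auxB auxB'
      rw [if_neg hl, zero_mul, sub_zero]
      refine mul_nonneg ?_ (hq0 _)
      split
      · exact hq0 _
      · exact le_refl 0
  have hAB : ∀ k l : ℕ, 0 ≤ (p k * auxA' p l - auxA' p k * p l) *
      (auxB q s k * auxB' q s l - auxB q s l * auxB' q s k) := by
    intro k l
    rcases le_total k l with h | h
    · exact mul_nonneg (hA k l h) (hB k l h)
    · have h0 := mul_nonneg (hA l k h) (hB l k h)
      nlinarith [h0]
  -- conclude
  rw [ge_iff_le, sq, e1]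
  nth_rewrite 2 [e1.symm.trans e4]
  rw [e3, e2]
  exact conv_key (s + 2) p (auxA' p) (auxB q s) (auxB' q s) hAB
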